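/- Let F be either ℚ or an imaginary quadratic field, with ring of integers O_F, and fix a field embedding φ : F → ℂ. Let a ∈ O_F be square-free and not a square in F, and let p, q ∈ F with q ≠ 0; write p = p_n / p_d and q = q_n / q_d with p_n, p_d, q_n, q_d ∈ O_F and p_d, q_d ≠ 0. Then for every nonzero tuple (x0, x1, x2, x3) ∈ O_F⁴, one has |φ( ((x0² − a·x1²) − p·(x2² − a·x3²))² − a·q²·(x2² − a·x3²)² )|² ≥ 1 / |φ(p_d·q_d)|⁴. In particular, the 4×4 code obtained from Cay(F(√a), p + q√a) by restricting the information symbols to O_F satisfies the non-vanishing determinant property. -/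

import Mathlib

open NumberField

open scoped Classical in
theorem cay_aux_one_le {F : Type*} [Field F] [NumberField F]
    (hF : Module.finrank ℚ F = 1 ∨
      (Module.finrank ℚ F = 2 ∧ ∀ w : InfinitePlace F, w.IsComplex))
    (φ : F →+* ℂ) (z : 𝓞 F) (hz : z ≠ 0) : 1 ≤ ‖φ (z : F)‖ := by
  have hcard : Fintype.card (InfinitePlace F) = 1 := by
    have h1 := InfinitePlace.card_add_two_mul_card_eq_rank F
    have h2 := InfinitePlace.card_eq_nrRealPlaces_add_nrComplexPlaces F
    rcases hF with h | ⟨h, hall⟩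
    · rw [h] at h1; omega
    · have h0 : InfinitePlace.nrRealPlaces F = 0 := by
        have : IsEmpty {w : InfinitePlace F // InfinitePlace.IsReal w} :=
          ⟨fun w => (InfinitePlace.not_isReal_iff_isComplex.mpr (hall w.1)) w.2⟩
        exact Fintype.card_eq_zero
      rw [h] at h1; omega
  have : Subsingleton (InfinitePlace F) := Fintype.card_le_one_iff_subsingleton.mp hcard.le
  have := InfinitePlace.one_le_of_lt_one (w := InfinitePlace.mk φ) hz
    (fun w hw => absurd (Subsingleton.elim w _) hw)
  rwa [InfinitePlace.apply] at this

/-- Let `F` be `ℚ` or an imaginary quadratic field with ring of integers `𝓞 F` and a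
fixed embedding `φ : F → ℂ`. Let `a ∈ 𝓞 F` be square-free and not a square in `F`, and
`p, q ∈ F` with `q ≠ 0`, written `p = p_n/p_d`, `q = q_n/q_d` with numerators and
denominators in `𝓞 F`, denominators nonzero. Then for every nonzero tuple
`(x0,x1,x2,x3) ∈ (𝓞 F)⁴`, the squared absolute value of the determinant of the
corresponding codeword of the 4×4 code built from `Cay(F(√a), p + q√a)` is at least
`1 / |φ(p_d·q_d)|⁴`: the code satisfies the non-vanishing determinant property. -/
theorem cay_four_by_four_nvd {F : Type*} [Field F] [NumberField F]
    (hF : Module.finrank ℚ F = 1 ∨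
      (Module.finrank ℚ F = 2 ∧ ∀ w : InfinitePlace F, w.IsComplex))
    (φ : F →+* ℂ)
    (a : 𝓞 F) (hasf : Squarefree a) (hasq : ¬∃ y : F, y ^ 2 = (a : F))
    (p q : F) (hq : q ≠ 0)
    (p_n p_d q_n q_d : 𝓞 F) (hpd : (p_d : F) ≠ 0) (hqd : (q_d : F) ≠ 0)
    (hp : p = (p_n : F) / (p_d : F)) (hq' : q = (q_n : F) / (q_d : F)) :
    ∀ x0 x1 x2 x3 : 𝓞 F, (x0, x1, x2, x3) ≠ (0, 0, 0, 0) →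
      1 / ‖φ ((p_d : F) * (q_d : F))‖ ^ 4 ≤
        ‖φ
          ((((x0 : F) ^ 2 - (a : F) * (x1 : F) ^ 2) -
              p * ((x2 : F) ^ 2 - (a : F) * (x3 : F) ^ 2)) ^ 2 -
            (a : F) * q ^ 2 * ((x2 : F) ^ 2 - (a : F) * (x3 : F) ^ 2) ^ 2)‖ ^ 2 := by
  intro x0 x1 x2 x3 hx
  have hD : (((x0 : F) ^ 2 - (a : F) * (x1 : F) ^ 2) -
        p * ((x2 : F) ^ 2 - (a : F) * (x3 : F) ^ 2)) ^ 2 -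
      (a : F) * q ^ 2 * ((x2 : F) ^ 2 - (a : F) * (x3 : F) ^ 2) ^ 2 ≠ 0 := by
    intro h
    have hM0 : (x2 : F) ^ 2 - (a : F) * (x3 : F) ^ 2 = 0 := by
      by_contra hM0
      apply hasq
      refine ⟨(((x0 : F) ^ 2 - (a : F) * (x1 : F) ^ 2) -
          p * ((x2 : F) ^ 2 - (a : F) * (x3 : F) ^ 2)) /
          (q * ((x2 : F) ^ 2 - (a : F) * (x3 : F) ^ 2)), ?_⟩
      have hqM : q * ((x2 : F) ^ 2 - (a : F) * (x3 : F) ^ 2) ≠ 0 := mul_ne_zero hq hM0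
      field_simp
      linear_combination h
    have hx3 : x3 = 0 := by
      by_contra hx3
      have hx3' : (x3 : F) ≠ 0 := by simpa using hx3
      apply hasq
      refine ⟨(x2 : F) / (x3 : F), ?_⟩
      field_simp
      linear_combination hM0
    have hx3' : (x3 : F) = 0 := by rw [hx3]; push_cast; ring
    have hx2 : x2 = 0 := by
      have h2 : (x2 : F) ^ 2 = 0 := by rw [hx3'] at hM0; linear_combination hM0
      have := pow_eq_zero_iff (n := 2) (by norm_num) |>.mp h2
      exact_mod_cast this
    rw [hx3'] at h
    have hx2' : (x2 : F) = 0 := by rw [hx2]; push_cast; ring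
    rw [hx2'] at h
    have hN0 : (x0 : F) ^ 2 - (a : F) * (x1 : F) ^ 2 = 0 := by
      have h4 : ((x0 : F) ^ 2 - (a : F) * (x1 : F) ^ 2) ^ 2 = 0 := by linear_combination h
      exact pow_eq_zero_iff (n := 2) (by norm_num) |>.mp h4
    have hx1 : x1 = 0 := by
      by_contra hx1
      have hx1' : (x1 : F) ≠ 0 := by simpa using hx1
      apply hasq
      refine ⟨(x0 : F) / (x1 : F), ?_⟩
      field_simp
      linear_combination hN0
    have hx0 : x0 = 0 := by
      have hx1' : (x1 : F) = 0 := by rw [hx1]; push_cast; ring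
      rw [hx1'] at hN0
      have h2 : (x0 : F) ^ 2 = 0 := by linear_combination hN0
      have := pow_eq_zero_iff (n := 2) (by norm_num) |>.mp h2
      exact_mod_cast this
    exact hx (by simp [hx0, hx1, hx2, hx3])
  set D : F := (((x0 : F) ^ 2 - (a : F) * (x1 : F) ^ 2) -
        p * ((x2 : F) ^ 2 - (a : F) * (x3 : F) ^ 2)) ^ 2 -
      (a : F) * q ^ 2 * ((x2 : F) ^ 2 - (a : F) * (x3 : F) ^ 2) ^ 2 with hDdef
  -- the integral multiple
  set z : 𝓞 F := (q_d * (p_d * (x0 ^ 2 - a * x1 ^ 2) - p_n * (x2 ^ 2 - a * x3 ^ 2))) ^ 2 -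
      a * p_d ^ 2 * q_n ^ 2 * (x2 ^ 2 - a * x3 ^ 2) ^ 2 with hzdef
  have hzF : (z : F) = ((p_d : F) * (q_d : F)) ^ 2 * D := by
    rw [hzdef, hDdef, hp, hq']
    push_cast
    field_simp
  have hzne : z ≠ 0 := by
    intro h
    apply hD
    have : (z : F) = 0 := by rw [h]; simp
    rw [hzF] at this
    rcases mul_eq_zero.mp this with h' | h'
    · exact absurd h' (pow_ne_zero 2 (mul_ne_zero hpd hqd))
    · exact h'
  have hkey : 1 ≤ ‖φ (z : F)‖ := cay_aux_one_le hF φ z hzne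
  rw [hzF] at hkey
  have habs : ‖φ (((p_d : F) * (q_d : F)) ^ 2 * D)‖ =
      ‖φ ((p_d : F) * (q_d : F))‖ ^ 2 * ‖φ D‖ := by
    simp only [map_mul, map_pow, norm_mul, norm_pow]
  rw [habs] at hkey
  have hApos : 0 < ‖φ ((p_d : F) * (q_d : F))‖ := by
    rw [norm_pos_iff]
    simpa using mul_ne_zero hpd hqd
  rw [div_le_iff₀ (by positivity)]
  calc (1 : ℝ) ≤ (‖φ ((p_d : F) * (q_d : F))‖ ^ 2 * ‖φ D‖) ^ 2 := by
        nlinarith [hkey, norm_nonneg (φ D), sq_nonneg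
          (‖φ ((p_d : F) * (q_d : F))‖ ^ 2 * ‖φ D‖)]
    _ = ‖φ D‖ ^ 2 * ‖φ ((p_d : F) * (q_d : F))‖ ^ 4 := by ring
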